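/- Let S be a finite nonempty alphabet, n ≥ 1, F = {f_i : ℝⁿ → ℝⁿ}_{i∈S} a family of continuous maps, C a covering family of languages over S, and W : C × ℝⁿ → ℝ a C-memory-based Lyapunov function for F with bounding functions α₁, α₂ ∈ K∞ and rate γ ∈ [0,1). Then for every switching signal σ : ℕ → S, every x₀ ∈ ℝⁿ, and every k ∈ ℕ, the solution satisfies |Ψ_σ(k, x₀)| ≤ α₁⁻¹(γᵏ α₂(|x₀|)). -/

import Mathlib

open Filter Topology NNReal

def IsClassKInf (α : ℝ≥0 → ℝ≥0) : Prop :=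
  Continuous α ∧ α 0 = 0 ∧ StrictMono α ∧ ∀ M : ℝ≥0, ∃ r, M ≤ α r

def IsClassKL (β : ℝ≥0 → ℝ≥0 → ℝ≥0) : Prop :=
  Continuous (fun p : ℝ≥0 × ℝ≥0 => β p.1 p.2) ∧
  (∀ t, Continuous (fun r => β r t) ∧ β 0 t = 0 ∧ StrictMono (fun r => β r t)) ∧
  (∀ r, Antitone (β r) ∧ Tendsto (β r) atTop (𝓝 0))

def PathComplete {N S : Type*} (E : Set (N × N × S)) : Prop :=
  ∀ K : ℕ, 1 ≤ K → ∀ j : Fin K → S, ∃ a : Fin (K + 1) → N,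
    ∀ k : Fin K, (a k.castSucc, a k.succ, j k) ∈ E

def sol {n : ℕ} {S : Type*} (f : S → EuclideanSpace ℝ (Fin n) → EuclideanSpace ℝ (Fin n))
    (σ : ℕ → S) (x0 : EuclideanSpace ℝ (Fin n)) : ℕ → EuclideanSpace ℝ (Fin n)
  | 0 => x0
  | k + 1 => f (σ k) (sol f σ x0 k)

def UGAS {n : ℕ} {S : Type*}
    (f : S → EuclideanSpace ℝ (Fin n) → EuclideanSpace ℝ (Fin n)) : Prop :=
  ∃ β : ℝ≥0 → ℝ≥0 → ℝ≥0, IsClassKL β ∧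
    ∀ (σ : ℕ → S) (x0 : EuclideanSpace ℝ (Fin n)) (k : ℕ),
      ‖sol f σ x0 k‖₊ ≤ β ‖x0‖₊ (k : ℝ≥0)

def IsPCLF {n : ℕ} {S N : Type*} (E : Set (N × N × S))
    (f : S → EuclideanSpace ℝ (Fin n) → EuclideanSpace ℝ (Fin n))
    (V : N → EuclideanSpace ℝ (Fin n) → ℝ) : Prop :=
  PathComplete E ∧ (∀ s, Continuous (V s)) ∧
  ∃ (α₁ α₂ : ℝ≥0 → ℝ≥0) (γ : ℝ≥0), IsClassKInf α₁ ∧ IsClassKInf α₂ ∧ γ < 1 ∧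
    (∀ s x, (α₁ ‖x‖₊ : ℝ) ≤ V s x ∧ V s x ≤ (α₂ ‖x‖₊ : ℝ)) ∧
    (∀ a b i, (a, b, i) ∈ E → ∀ x, V b (f i x) ≤ (γ : ℝ) * V a x)

def IsCoveringFamily {S : Type*} (C : Finset (Set (List S))) : Prop :=
  (∀ B ∈ C, Language.IsRegular (B : Language S)) ∧
  (⋃ B ∈ C, B) = Set.univ ∧
  ∀ B ∈ C, ∀ h : S, ∃ C' ∈ C, (fun w => h :: w) '' B ⊆ C'

def IsMBLF {n : ℕ} {S : Type*} (C : Finset (Set (List S)))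
    (f : S → EuclideanSpace ℝ (Fin n) → EuclideanSpace ℝ (Fin n))
    (W : {B // B ∈ C} → EuclideanSpace ℝ (Fin n) → ℝ) : Prop :=
  (∀ B, Continuous (W B)) ∧
  ∃ (α₁ α₂ : ℝ≥0 → ℝ≥0) (γ : ℝ≥0), IsClassKInf α₁ ∧ IsClassKInf α₂ ∧ γ < 1 ∧
    (∀ B x, (α₁ ‖x‖₊ : ℝ) ≤ W B x ∧ W B x ≤ (α₂ ‖x‖₊ : ℝ)) ∧
    (∀ (B C' : {B // B ∈ C}) (h : S),
      (fun w => h :: w) '' (B : Set (List S)) ⊆ (C' : Set (List S)) →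
      ∀ x, W C' (f h x) ≤ (γ : ℝ) * W B x)

def prefixClass {S : Type*} (i : List S) : Set (List S) := {w | w <+: i ∨ i <+: w}

/-- explicit decay estimate produced by a memory-based
Lyapunov function with bounds `α₁, α₂` and rate `γ`. -/
theorem mblf_explicit_bound {S : Type} [Fintype S] [Nonempty S]
    (n : ℕ) (hn : 1 ≤ n)
    (f : S → EuclideanSpace ℝ (Fin n) → EuclideanSpace ℝ (Fin n))
    (hf : ∀ i, Continuous (f i))
    (C : Finset (Set (List S))) (hC : IsCoveringFamily C)
    (W : {B // B ∈ C} → EuclideanSpace ℝ (Fin n) → ℝ)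
    (α₁ α₂ : ℝ≥0 → ℝ≥0) (γ : ℝ≥0)
    (hα₁ : IsClassKInf α₁) (hα₂ : IsClassKInf α₂) (hγ : γ < 1)
    (hWcont : ∀ B, Continuous (W B))
    (hsand : ∀ B x, (α₁ ‖x‖₊ : ℝ) ≤ W B x ∧ W B x ≤ (α₂ ‖x‖₊ : ℝ))
    (hdec : ∀ (B C' : {B // B ∈ C}) (h : S),
      (fun w => h :: w) '' (B : Set (List S)) ⊆ (C' : Set (List S)) →
      ∀ x, W C' (f h x) ≤ (γ : ℝ) * W B x) :
    ∀ (σ : ℕ → S) (x0 : EuclideanSpace ℝ (Fin n)) (k : ℕ),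
      ‖sol f σ x0 k‖₊ ≤ Function.invFun α₁ (γ ^ k * α₂ ‖x0‖₊) := by

  -- auxiliary facts about class K∞ functions
  intro σ x0 k
  -- surjectivity of α₁
  have hsurj : ∀ y : ℝ≥0, ∃ r, α₁ r = y := by
    intro y
    obtain ⟨r, hr⟩ := hα₁.2.2.2 y
    have h0 : α₁ 0 = 0 := hα₁.2.1
    have : y ∈ Set.Icc (α₁ 0) (α₁ r) := ⟨by rw [h0]; exact (zero_le : (0:ℝ≥0) ≤ y), hr⟩
    obtain ⟨c, _, hc⟩ := intermediate_value_Icc (zero_le : (0:ℝ≥0) ≤ r) (hα₁.1.continuousOn) this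
    exact ⟨c, hc⟩
  -- nonempty covering family element containing []
  have hcov := hC.2.1
  have h0 : ([] : List S) ∈ (⋃ B ∈ C, B) := by rw [hcov]; trivial
  simp only [Set.mem_iUnion] at h0
  obtain ⟨B0, hB0, _⟩ := h0
  -- recursive sequence of languages
  let next : {B // B ∈ C} → ℕ → {B // B ∈ C} := fun Bk k =>
    ⟨Classical.choose (hC.2.2 Bk.1 Bk.2 (σ k)),
     (Classical.choose_spec (hC.2.2 Bk.1 Bk.2 (σ k))).1⟩
  let Bseq : ℕ → {B // B ∈ C} := fun k => Nat.rec (⟨B0, hB0⟩ : {B // B ∈ C}) (fun k Bk => next Bk k) k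
  have hstep : ∀ k, (fun w => σ k :: w) '' ((Bseq k).1) ⊆ (Bseq (k+1)).1 := by
    intro k
    exact (Classical.choose_spec (hC.2.2 (Bseq k).1 (Bseq k).2 (σ k))).2
  -- main induction
  have key : ∀ m, W (Bseq m) (sol f σ x0 m) ≤ (γ : ℝ) ^ m * W ⟨B0, hB0⟩ x0 := by
    intro m
    induction m with
    | zero => simp [sol, Bseq]
    | succ m ih =>
        have h1 : W (Bseq (m+1)) (f (σ m) (sol f σ x0 m)) ≤ (γ : ℝ) * W (Bseq m) (sol f σ x0 m) :=
          hdec (Bseq m) (Bseq (m+1)) (σ m) (hstep m) _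
        calc W (Bseq (m+1)) (sol f σ x0 (m+1)) = W (Bseq (m+1)) (f (σ m) (sol f σ x0 m)) := rfl
          _ ≤ (γ : ℝ) * W (Bseq m) (sol f σ x0 m) := h1
          _ ≤ (γ : ℝ) * ((γ : ℝ) ^ m * W ⟨B0, hB0⟩ x0) := by
              exact mul_le_mul_of_nonneg_left ih γ.coe_nonneg
          _ = (γ : ℝ) ^ (m+1) * W ⟨B0, hB0⟩ x0 := by ring
  have hchain : (α₁ ‖sol f σ x0 k‖₊ : ℝ) ≤ ((γ ^ k * α₂ ‖x0‖₊ : ℝ≥0) : ℝ) := by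
    have h1 := (hsand (Bseq k) (sol f σ x0 k)).1
    have h2 := (hsand ⟨B0, hB0⟩ x0).2
    have h3 : (γ : ℝ) ^ k * W ⟨B0, hB0⟩ x0 ≤ (γ : ℝ) ^ k * (α₂ ‖x0‖₊ : ℝ) :=
      mul_le_mul_of_nonneg_left h2 (pow_nonneg γ.coe_nonneg k)
    push_cast
    exact h1.trans ((key k).trans h3)
  have hle : α₁ ‖sol f σ x0 k‖₊ ≤ γ ^ k * α₂ ‖x0‖₊ := by exact_mod_cast hchain
  -- conclude via invFun
  set y := γ ^ k * α₂ ‖x0‖₊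
  have hy : α₁ (Function.invFun α₁ y) = y := Function.invFun_eq (hsurj y)
  have := hα₁.2.2.1.le_iff_le (a := ‖sol f σ x0 k‖₊) (b := Function.invFun α₁ y)
  rw [← this, hy]
  exact hle
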